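/- Let I be an irreducible interval of a MinBudget instance (N, ⊴, c). Then every filter F ⊆ I of ⊴_I satisfies c(F) ≤ max{0, c(I)}. -/

import Mathlib

set_option linter.unusedSectionVars false


open List

variable {ι : Type*} [DecidableEq ι]

/-- Total cost of a schedule (list of jobs). -/
def listCost (c : ι → ℝ) (S : List ι) : ℝ := (S.map c).sum

/-- Budget of a schedule: maximum cost of a prefix (the empty prefix has cost 0). -/
def listBudget (c : ι → ℝ) : List ι → ℝ
  | [] => 0
  | j :: t => max 0 (c j + listBudget c t)

/-- Return of a schedule. -/
def listReturn (c : ι → ℝ) (S : List ι) : ℝ := listCost c S - listBudget c S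

/-- `S` enumerates the finite job set `N` without repetition. -/
def IsScheduleOf (N : Finset ι) (S : List ι) : Prop :=
  S.Nodup ∧ ∀ j, j ∈ S ↔ j ∈ N

/-- `S` is a linear extension of the precedence relation `r` (restricted to its jobs). -/
def RespectsOrder (r : ι → ι → Prop) (S : List ι) : Prop :=
  ∀ i j, r i j → i ∈ S → j ∈ S → S.idxOf i ≤ S.idxOf j

/-- Minimum budget over all feasible schedules of the job set `X`. -/
noncomputable def setBudget (r : ι → ι → Prop) (c : ι → ℝ) (X : Finset ι) : ℝ :=
  sInf {b | ∃ S : List ι, IsScheduleOf X S ∧ RespectsOrder r S ∧ listBudget c S = b}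

/-- Total cost of a job set. -/
def setCost (c : ι → ℝ) (X : Finset ι) : ℝ := ∑ j ∈ X, c j

/-- Return of a job set. -/
noncomputable def setReturn (r : ι → ι → Prop) (c : ι → ℝ) (X : Finset ι) : ℝ :=
  setCost c X - setBudget r c X

/-- The cbr-preorder on job sets. -/
def cbrLE (r : ι → ι → Prop) (c : ι → ℝ) (X Y : Finset ι) : Prop :=
  (setCost c X < 0 ∧ 0 ≤ setCost c Y) ∨
  (setCost c X < 0 ∧ setCost c Y < 0 ∧ setBudget r c X < setBudget r c Y) ∨
  (setCost c X < 0 ∧ setCost c Y < 0 ∧ setBudget r c X = setBudget r c Y ∧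
    setReturn r c X ≤ setReturn r c Y) ∨
  (0 ≤ setCost c X ∧ 0 ≤ setCost c Y ∧ setReturn r c X ≤ setReturn r c Y)

/-- `J` is an ideal (downward-closed subset) of `r` restricted to `I`. -/
def IsIdealIn (r : ι → ι → Prop) (I J : Finset ι) : Prop :=
  J ⊆ I ∧ ∀ j ∈ J, ∀ i ∈ I, r i j → i ∈ J

/-- `F` is a filter (upward-closed subset) of `r` restricted to `I`. -/
def IsFilterIn (r : ι → ι → Prop) (I F : Finset ι) : Prop :=
  F ⊆ I ∧ ∀ i ∈ F, ∀ j ∈ I, r i j → j ∈ F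

/-- `I` is an interval of `r` on `N`: intersection of an ideal and a filter. -/
def IsIntervalIn (r : ι → ι → Prop) (N I : Finset ι) : Prop :=
  ∃ J F, IsIdealIn r N J ∧ IsFilterIn r N F ∧ I = J ∩ F

/-- An irreducible interval: every ideal of the restricted order is `⪰` the interval. -/
def IsIrreducibleIn (r : ι → ι → Prop) (c : ι → ℝ) (N I : Finset ι) : Prop :=
  IsIntervalIn r N I ∧ ∀ J, IsIdealIn r I J → cbrLE r c I J

/-- A schedule (given as blocks `SS`) in increasing irreducible structure. -/
def IncIrrStructure (r : ι → ι → Prop) (c : ι → ℝ) (N : Finset ι)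
    (SS : List (List ι)) : Prop :=
  IsScheduleOf N SS.flatten ∧ RespectsOrder r SS.flatten ∧
  (∀ S ∈ SS, IsIrreducibleIn r c N S.toFinset ∧ RespectsOrder r S ∧
    listBudget c S = setBudget r c S.toFinset) ∧
  ∀ i j : Fin SS.length, i < j → cbrLE r c (SS.get i).toFinset (SS.get j).toFinset

-- L1
lemma listBudget_nonneg (c : ι → ℝ) : ∀ S : List ι, 0 ≤ listBudget c S
  | [] => le_refl 0
  | _ :: _ => le_max_left 0 _

-- L2
lemma listCost_le_listBudget (c : ι → ℝ) : ∀ (P S : List ι), P <+: S →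
    listCost c P ≤ listBudget c S := by
  intro P
  induction P with
  | nil => intro S _; simpa [listCost] using listBudget_nonneg c S
  | cons x P' ih =>
    rintro S ⟨t, rfl⟩
    have h1 : listCost c P' ≤ listBudget c (P' ++ t) := ih _ ⟨t, rfl⟩
    simp only [listCost, List.map_cons, List.sum_cons, List.cons_append, listBudget]
    calc c x + (P'.map c).sum ≤ c x + listBudget c (P' ++ t) := by
            exact (add_le_add_iff_left _).mpr h1
      _ ≤ max 0 (c x + listBudget c (P' ++ t)) := le_max_right _ _

-- L3
lemma listBudget_le (c : ι → ℝ) : ∀ (S : List ι) (B : ℝ),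
    (∀ P, P <+: S → listCost c P ≤ B) → 0 ≤ B → listBudget c S ≤ B := by
  intro S
  induction S with
  | nil => intro B _ hB; simpa [listBudget] using hB
  | cons j t ih =>
    intro B h hB
    have hcj : c j ≤ B := by simpa [listCost] using h [j] ⟨t, rfl⟩
    have ht : listBudget c t ≤ B - c j := by
      refine ih (B - c j) (fun P hP => ?_) (by linarith)
      have := h (j :: P) (by obtain ⟨u, rfl⟩ := hP; exact ⟨u, rfl⟩)
      simp only [listCost, List.map_cons, List.sum_cons] at this
      simp only [listCost]; linarith
    simp only [listBudget]
    exact max_le hB (by linarith)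

-- L4
lemma exists_prefix_of_filter_prefix (p : ι → Bool) : ∀ (S P' : List ι),
    P' <+: S.filter p → ∃ Q, Q <+: S ∧ P' = Q.filter p := by
  intro S
  induction S with
  | nil =>
    intro P' h
    simp only [List.filter_nil, List.prefix_nil] at h
    exact ⟨[], ⟨[], rfl⟩, by simp [h]⟩
  | cons a t ih =>
    intro P' h
    by_cases ha : p a
    · rw [List.filter_cons_of_pos ha] at h
      match P' with
      | [] => exact ⟨[], List.nil_prefix, rfl⟩
      | x :: P₂ =>
        obtain ⟨u, hu⟩ := h
        rw [List.cons_append] at hu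
        injection hu with h1 h2
        obtain ⟨Q₂, hQ₂, rfl⟩ := ih P₂ ⟨u, h2⟩
        exact ⟨a :: Q₂, (List.cons_prefix_cons.mpr ⟨rfl, hQ₂⟩), by rw [List.filter_cons_of_pos ha, h1]⟩
    · rw [List.filter_cons_of_neg (by simpa using ha)] at h
      obtain ⟨Q₂, hQ₂, rfl⟩ := ih P' h
      exact ⟨a :: Q₂, (List.cons_prefix_cons.mpr ⟨rfl, hQ₂⟩), by rw [List.filter_cons_of_neg (by simpa using ha)]⟩

-- L5
lemma mem_prefix_of_indexOf_le {i j : ι} : ∀ (Q S : List ι), Q <+: S → i ∈ S → j ∈ Q →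
    S.idxOf i ≤ S.idxOf j → i ∈ Q := by
  intro Q
  induction Q with
  | nil => intro S _ _ hj; exact absurd hj List.not_mem_nil
  | cons a Q' ih =>
    rintro S ⟨u, rfl⟩ hi hj hle
    by_cases hia : i = a
    · simp [hia]
    · rw [List.cons_append] at hle hi
      rw [List.idxOf_cons_ne _ (Ne.symm hia)] at hle
      by_cases hja : j = a
      · rw [hja, List.idxOf_cons_self] at hle; omega
      · rw [List.idxOf_cons_ne _ (Ne.symm hja)] at hle
        have hi' : i ∈ Q' ++ u := by
          rcases List.mem_cons.mp hi with h | h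
          · exact absurd h hia
          · exact h
        have hj' : j ∈ Q' := by
          rcases List.mem_cons.mp hj with h | h
          · exact absurd h hja
          · exact h
        exact List.mem_cons_of_mem a (ih (Q' ++ u) ⟨u, rfl⟩ hi' hj' (by omega))

-- L6
lemma indexOf_filter_mono (p : ι → Bool) {x y : ι} : ∀ (S : List ι), x ∈ S → y ∈ S →
    p x = true → p y = true → S.idxOf x ≤ S.idxOf y →
    (S.filter p).idxOf x ≤ (S.filter p).idxOf y := by
  intro S
  induction S with
  | nil => intro hx; exact absurd hx List.not_mem_nil
  | cons a t ih =>
    intro hx hy hpx hpy hle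
    by_cases hxa : x = a
    · subst hxa
      rw [List.filter_cons_of_pos hpx, List.idxOf_cons_self]
      exact Nat.zero_le _
    · by_cases hya : y = a
      · subst hya
        rw [List.idxOf_cons_ne _ (Ne.symm hxa), List.idxOf_cons_self] at hle
        exact absurd hle (by omega)
      · rw [List.idxOf_cons_ne _ (Ne.symm hxa), List.idxOf_cons_ne _ (Ne.symm hya)] at hle
        have hx' : x ∈ t := (List.mem_cons.mp hx).resolve_left hxa
        have hy' : y ∈ t := (List.mem_cons.mp hy).resolve_left hya
        have key := ih hx' hy' hpx hpy (by omega)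
        by_cases hpa : p a
        · rw [List.filter_cons_of_pos hpa, List.idxOf_cons_ne _ (Ne.symm hxa),
            List.idxOf_cons_ne _ (Ne.symm hya)]
          omega
        · rw [List.filter_cons_of_neg (by simpa using hpa)]
          exact key

-- cost split
lemma listCost_filter_add (c : ι → ℝ) (p : ι → Bool) : ∀ Q : List ι,
    listCost c (Q.filter p) + listCost c (Q.filter (fun x => !p x)) = listCost c Q := by
  intro Q
  induction Q with
  | nil => simp [listCost]
  | cons a t ih =>
    by_cases hpa : p a
    · rw [List.filter_cons_of_pos hpa, List.filter_cons_of_neg (by simp [hpa])]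
      simp only [listCost, List.map_cons, List.sum_cons] at ih ⊢; linarith
    · rw [List.filter_cons_of_neg (by simpa using hpa),
        List.filter_cons_of_pos (by simp [Bool.not_eq_true'] at hpa ⊢; exact hpa)]
      simp only [listCost, List.map_cons, List.sum_cons] at ih ⊢; linarith

-- existence of minimal element
lemma exists_minimal_elt (r : ι → ι → Prop) (hr : IsPartialOrder ι r) :
    ∀ X : Finset ι, X.Nonempty → ∃ m ∈ X, ∀ i ∈ X, r i m → i = m := by
  classical
  intro X
  induction X using Finset.strongInductionOn with
  | _ X ih =>
    rintro ⟨a, ha⟩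
    set Y := X.filter (fun x => r x a ∧ x ≠ a) with hY
    rcases Y.eq_empty_or_nonempty with hYe | hYne
    · refine ⟨a, ha, fun i hi hri => ?_⟩
      by_contra hne
      have : i ∈ Y := by simp [hY, Finset.mem_filter, hi, hri, hne]
      simp [hYe] at this
    · have hss : Y ⊂ X := by
        refine Finset.ssubset_iff_of_subset (Finset.filter_subset _ _) |>.mpr ?_
        exact ⟨a, ha, by simp [hY]⟩
      obtain ⟨m, hmY, hmin⟩ := ih Y hss hYne
      obtain ⟨hmX, hma, hmna⟩ : m ∈ X ∧ r m a ∧ m ≠ a := by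
        simpa [hY] using hmY
      refine ⟨m, hmX, fun i hi hri => ?_⟩
      have hia : r i a := hr.trans _ _ _ hri hma
      by_cases hiae : i = a
      · subst hiae
        exact absurd (hr.antisymm _ _ hma hri) hmna
      · exact hmin i (by simp [hY, hi, hia, hiae]) hri

-- existence of a schedule (topological sort)
lemma exists_schedule (r : ι → ι → Prop) (hr : IsPartialOrder ι r) :
    ∀ X : Finset ι, ∃ S, IsScheduleOf X S ∧ RespectsOrder r S := by
  classical
  intro X
  induction X using Finset.strongInductionOn with
  | _ X ih =>
    rcases X.eq_empty_or_nonempty with rfl | hne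
    · exact ⟨[], ⟨List.nodup_nil, by simp⟩, fun i j _ hi => absurd hi List.not_mem_nil⟩
    · obtain ⟨m, hm, hmin⟩ := exists_minimal_elt r hr X hne
      obtain ⟨S', ⟨hnd, hmem⟩, hres⟩ := ih (X.erase m) (Finset.erase_ssubset hm)
      have hmS' : m ∉ S' := fun h => by simp [hmem m] at h
      refine ⟨m :: S', ⟨List.nodup_cons.mpr ⟨hmS', hnd⟩, fun j => ?_⟩, ?_⟩
      · constructor
        · intro h
          rcases List.mem_cons.mp h with rfl | h
          · exact hm
          · exact Finset.mem_of_mem_erase ((hmem j).mp h)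
        · intro h
          by_cases hjm : j = m
          · simp [hjm]
          · exact List.mem_cons_of_mem m ((hmem j).mpr (Finset.mem_erase.mpr ⟨hjm, h⟩))
      · intro i j hij hi hj
        by_cases him : i = m
        · subst him; rw [List.idxOf_cons_self]; exact Nat.zero_le _
        · have hi' : i ∈ S' := (List.mem_cons.mp hi).resolve_left him
          have hiX : i ∈ X := Finset.mem_of_mem_erase ((hmem i).mp hi')
          by_cases hjm : j = m
          · subst hjm; exact absurd (hmin i hiX hij) him
          · have hj' : j ∈ S' := (List.mem_cons.mp hj).resolve_left hjm
            rw [List.idxOf_cons_ne _ (Ne.symm him), List.idxOf_cons_ne _ (Ne.symm hjm)]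
            exact Nat.succ_le_succ (hres i j hij hi' hj')


lemma budget_lb (r : ι → ι → Prop) (c : ι → ℝ) (X : Finset ι) :
    ∀ b ∈ {b | ∃ S : List ι, IsScheduleOf X S ∧ RespectsOrder r S ∧ listBudget c S = b},
      (0:ℝ) ≤ b := by
  rintro b ⟨S, _, _, rfl⟩; exact listBudget_nonneg c S

lemma setBudget_sdiff_le (r : ι → ι → Prop) (hr : IsPartialOrder ι r) (c : ι → ℝ)
    (I F₀ : Finset ι) (hF₀ : IsFilterIn r I F₀)
    (hmax : ∀ F', IsFilterIn r I F' → setCost c F' ≤ setCost c F₀) :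
    setBudget r c (I \ F₀) ≤ setBudget r c I := by
  classical
  obtain ⟨S₀, hS₀, hR₀⟩ := exists_schedule r hr I
  have hne : {b | ∃ S : List ι, IsScheduleOf I S ∧ RespectsOrder r S ∧ listBudget c S = b}.Nonempty :=
    ⟨listBudget c S₀, ⟨S₀, hS₀, hR₀, rfl⟩⟩
  apply le_csInf hne
  rintro b ⟨S, hS, hR, rfl⟩
  set p : ι → Bool := fun x => decide (x ∈ I \ F₀) with hp
  have hmemS : ∀ x, x ∈ S ↔ x ∈ I := hS.2
  have hS'sched : IsScheduleOf (I \ F₀) (S.filter p) := by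
    refine ⟨hS.1.filter p, fun j => ?_⟩
    constructor
    · intro h
      have := List.mem_filter.mp h
      simpa [hp] using this.2
    · intro h
      refine List.mem_filter.mpr ⟨(hmemS j).mpr (Finset.mem_sdiff.mp h).1, ?_⟩
      simp only [hp, decide_eq_true_eq]
      exact h
  have hS'resp : RespectsOrder r (S.filter p) := by
    intro i j hij hi hj
    have hi' := List.mem_filter.mp hi
    have hj' := List.mem_filter.mp hj
    exact indexOf_filter_mono p S hi'.1 hj'.1 hi'.2 hj'.2 (hR i j hij hi'.1 hj'.1)
  have hb' : setBudget r c (I \ F₀) ≤ listBudget c (S.filter p) :=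
    csInf_le ⟨0, budget_lb r c (I \ F₀)⟩ ⟨S.filter p, hS'sched, hS'resp, rfl⟩
  refine hb'.trans (listBudget_le c (S.filter p) (listBudget c S) ?_ (listBudget_nonneg c S))
  intro P' hP'
  obtain ⟨Q, hQS, rfl⟩ := exists_prefix_of_filter_prefix p S P' hP'
  have hsplit := listCost_filter_add c p Q
  set A := (Q.filter (fun x => !p x)).toFinset with hA
  have hQnd : Q.Nodup := hQS.sublist.nodup hS.1
  have hQsub : ∀ x ∈ Q, x ∈ I := fun x hx => (hmemS x).mp (hQS.sublist.mem hx)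
  have hcostA : listCost c (Q.filter (fun x => !p x)) = setCost c A := by
    rw [setCost, hA, List.sum_toFinset c (hQnd.filter _)]; rfl
  have hAsub : A ⊆ F₀ := by
    intro x hx
    have hx' := List.mem_filter.mp (List.mem_toFinset.mp hx)
    have hxI : x ∈ I := hQsub x hx'.1
    have hnot : ¬ (x ∈ I \ F₀) := by
      have := hx'.2
      simp only [hp, Bool.not_eq_true', decide_eq_false_iff_not] at this
      exact this
    rw [Finset.mem_sdiff] at hnot
    by_contra hxF
    exact hnot ⟨hxI, hxF⟩
  have hGfilt : IsFilterIn r I (F₀ \ A) := by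
    refine ⟨Finset.sdiff_subset.trans hF₀.1, ?_⟩
    intro i hi j hj hij
    have hiF : i ∈ F₀ := (Finset.mem_sdiff.mp hi).1
    have hiA : i ∉ A := (Finset.mem_sdiff.mp hi).2
    have hjF : j ∈ F₀ := hF₀.2 i hiF j hj hij
    refine Finset.mem_sdiff.mpr ⟨hjF, fun hjA => ?_⟩
    have hjQ : j ∈ Q := (List.mem_filter.mp (List.mem_toFinset.mp hjA)).1
    have hiS : i ∈ S := (hmemS i).mpr (hF₀.1 hiF)
    have hjS : j ∈ S := (hmemS j).mpr hj
    have hiQ : i ∈ Q := mem_prefix_of_indexOf_le Q S hQS hiS hjQ (hR i j hij hiS hjS)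
    apply hiA
    rw [hA]
    refine List.mem_toFinset.mpr (List.mem_filter.mpr ⟨hiQ, ?_⟩)
    simp only [hp, Bool.not_eq_true', decide_eq_false_iff_not, Finset.mem_sdiff, not_and,
      not_not]
    intro _; exact hiF
  have hGA : setCost c (F₀ \ A) + setCost c A = setCost c F₀ := Finset.sum_sdiff hAsub
  have hApos : 0 ≤ setCost c A := by have := hmax _ hGfilt; linarith
  have hQcost : listCost c Q ≤ listBudget c S := listCost_le_listBudget c Q S hQS
  rw [hcostA] at hsplit
  linarith


theorem irreducible_filter_cost (r : ι → ι → Prop) (hr : IsPartialOrder ι r)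
    (c : ι → ℝ) (N I : Finset ι) (hI : IsIrreducibleIn r c N I) :
    ∀ F, IsFilterIn r I F → setCost c F ≤ max 0 (setCost c I) := by
  classical
  intro F hF
  have ideal_compl : ∀ F', IsFilterIn r I F' → IsIdealIn r I (I \ F') := by
    intro F' hF'
    refine ⟨Finset.sdiff_subset, ?_⟩
    intro j hj i hi hij
    rw [Finset.mem_sdiff] at hj ⊢
    exact ⟨hi, fun hiF => hj.2 (hF'.2 i hiF j hj.1 hij)⟩
  have hsum : ∀ F' : Finset ι, F' ⊆ I → setCost c (I \ F') + setCost c F' = setCost c I :=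
    fun F' h => Finset.sum_sdiff h
  rcases le_or_gt 0 (setCost c I) with hci | hci
  · rw [max_eq_right hci]
    have hcbr := hI.2 _ (ideal_compl F hF)
    have h4 : 0 ≤ setCost c (I \ F) := by
      rcases hcbr with h | h | h | h
      · linarith [h.1]
      · linarith [h.1]
      · linarith [h.1]
      · exact h.2.1
    have := hsum F hF.1
    linarith
  · rw [max_eq_left hci.le]
    by_contra hpos
    push_neg at hpos
    set Fs := I.powerset.filter (fun F' => IsFilterIn r I F') with hFs
    have hFmem : F ∈ Fs := by
      rw [hFs, Finset.mem_filter, Finset.mem_powerset]; exact ⟨hF.1, hF⟩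
    obtain ⟨F₀, hF₀mem, hF₀max⟩ := Finset.exists_max_image Fs (setCost c) ⟨F, hFmem⟩
    have hF₀filt : IsFilterIn r I F₀ := (Finset.mem_filter.mp hF₀mem).2
    have hmax : ∀ F', IsFilterIn r I F' → setCost c F' ≤ setCost c F₀ := by
      intro F' hF'
      exact hF₀max F' (by rw [hFs, Finset.mem_filter, Finset.mem_powerset]; exact ⟨hF'.1, hF'⟩)
    have hF₀pos : 0 < setCost c F₀ := lt_of_lt_of_le hpos (hmax F hF)
    have hb := setBudget_sdiff_le r hr c I F₀ hF₀filt hmax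
    have hcbr := hI.2 _ (ideal_compl F₀ hF₀filt)
    have hsum0 := hsum F₀ hF₀filt.1
    rcases hcbr with h | h | h | h
    · linarith [h.2]
    · linarith [h.2.2]
    · have hret := h.2.2.2
      simp only [setReturn] at hret
      rw [h.2.2.1] at hret
      linarith
    · linarith [h.1]
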